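/- Let x be a non-uniform lattice of either class and ν ∈ ℝ. Then there exists a constant c(ν) ∈ ℂ such that τ_ν(z) = κ_{2ν+1}·x_ν(z) + c(ν) for every z ∈ ℂ with ∇x_{ν+1}(z) ≠ 0; i.e. τ_ν is a polynomial of degree at most one in x_ν(z) with leading coefficient κ_{2ν+1}. (Proposition 2.2) -/
import Mathlib


noncomputable section

open Finset

/-- `x` is a non-uniform lattice of one of the two classes (q-quadratic with
`q = e^w`, or quadratic), together with its associated functions `α = a` and
`γ = g`. -/
def IsNonUniformLattice (w : ℂ) (x : ℂ → ℂ) (a g : ℝ → ℂ) : Prop :=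
  (Complex.exp w ≠ 1 ∧
    ∃ c1 c2 c3 : ℂ, c1 * c2 ≠ 0 ∧
      (∀ s : ℂ, x s = c1 * Complex.exp (s * w) + c2 * Complex.exp (-(s * w)) + c3) ∧
      (∀ μ : ℝ, a μ =
        (Complex.exp ((μ : ℂ) / 2 * w) + Complex.exp (-((μ : ℂ) / 2 * w))) / 2) ∧
      (∀ μ : ℝ, g μ =
        (Complex.exp ((μ : ℂ) / 2 * w) - Complex.exp (-((μ : ℂ) / 2 * w))) /
          (Complex.exp ((1 : ℂ) / 2 * w) - Complex.exp (-((1 : ℂ) / 2 * w))))) ∨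
  (∃ c1 c2 c3 : ℂ, c1 ≠ 0 ∧
    (∀ s : ℂ, x s = c1 * s ^ 2 + c2 * s + c3) ∧
    (∀ μ : ℝ, a μ = 1) ∧ (∀ μ : ℝ, g μ = (μ : ℂ)))

/-- `xl x ν s = x_ν(s) = x (s + ν/2)`. -/
def xl (x : ℂ → ℂ) (ν : ℝ) (s : ℂ) : ℂ := x (s + (ν : ℂ) / 2)

/-- `σ(z) = σ̃(x z) - (1/2)·τ̃(x z)·∇x₁(z)`. -/
def sig (x : ℂ → ℂ) (st tt : Polynomial ℂ) (z : ℂ) : ℂ :=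
  st.eval (x z) - (1 / 2) * tt.eval (x z) * (xl x 1 z - xl x 1 (z - 1))

/-- `κ_ν = α(ν-1)·τ̃' + (1/2)·γ(ν-1)·σ̃''`. -/
def kap (a g : ℝ → ℂ) (st tt : Polynomial ℂ) (ν : ℝ) : ℂ :=
  a (ν - 1) * tt.coeff 1 + (1 / 2) * g (ν - 1) * (2 * st.coeff 2)

/-- Backward difference quotient `∇_ν f (z) = ∇f(z)/∇x_ν(z)`. -/
def nab (x : ℂ → ℂ) (ν : ℝ) (f : ℂ → ℂ) (z : ℂ) : ℂ :=
  (f z - f (z - 1)) / (xl x ν z - xl x ν (z - 1))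

/-- Forward difference quotient `Δ_ν f (z) = Δf(z)/Δx_ν(z)`. -/
def del (x : ℂ → ℂ) (ν : ℝ) (f : ℂ → ℂ) (z : ℂ) : ℂ :=
  (f (z + 1) - f z) / (xl x ν (z + 1) - xl x ν z)

/-- Generalized power `[x_α(s) - x_α(z)]^{(m)} = ∏_{k=0}^{m-1} (x_α(s) - x_α(z-k))`. -/
def gp (x : ℂ → ℂ) (m : ℕ) (al : ℝ) (s z : ℂ) : ℂ :=
  ∏ k ∈ Finset.range m, (xl x al s - xl x al (z - (k : ℂ)))

/-- The defining relation for the family `τ_ν = T ν`: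
`τ_ν(z)·∇x_{ν+1}(z) = σ(z+ν) - σ(z) + τ(z+ν)·∇x₁(z+ν)`. -/
def TauFamily (x : ℂ → ℂ) (st tt : Polynomial ℂ) (T : ℝ → ℂ → ℂ) : Prop :=
  ∀ (ν : ℝ) (z : ℂ),
    T ν z * (xl x (ν + 1) z - xl x (ν + 1) (z - 1)) =
      sig x st tt (z + (ν : ℂ)) - sig x st tt z +
        tt.eval (x (z + (ν : ℂ))) * (xl x 1 (z + (ν : ℂ)) - xl x 1 (z + (ν : ℂ) - 1))

set_option maxHeartbeats 1000000

/-- Proposition 2.2: `τ_ν(z) = κ_{2ν+1}·x_ν(z) + c(ν)`. -/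
theorem prop2_2
    (w : ℂ) (x : ℂ → ℂ) (a g : ℝ → ℂ)
    (hlat : IsNonUniformLattice w x a g)
    (st tt : Polynomial ℂ) (hst : st.degree ≤ 2) (htt : tt.degree ≤ 1)
    (T : ℝ → ℂ → ℂ) (hT : TauFamily x st tt T) (ν : ℝ) :
    ∃ c : ℂ, ∀ z : ℂ,
      xl x (ν + 1) z - xl x (ν + 1) (z - 1) ≠ 0 →
      T ν z = kap a g st tt (2 * ν + 1) * xl x ν z + c := by
  have hstn : st.natDegree < 3 :=
    lt_of_le_of_lt (Polynomial.natDegree_le_iff_degree_le.mpr (by exact_mod_cast hst)) (by norm_num)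
  have httn : tt.natDegree < 2 :=
    lt_of_le_of_lt (Polynomial.natDegree_le_iff_degree_le.mpr (by exact_mod_cast htt)) (by norm_num)
  have hstev : ∀ y : ℂ, st.eval y = st.coeff 0 + st.coeff 1 * y + st.coeff 2 * y ^ 2 := by
    intro y
    rw [Polynomial.eval_eq_sum_range' hstn]
    simp only [Finset.sum_range_succ, Finset.sum_range_zero]
    ring
  have httev : ∀ y : ℂ, tt.eval y = tt.coeff 0 + tt.coeff 1 * y := by
    intro y
    rw [Polynomial.eval_eq_sum_range' httn]
    simp only [Finset.sum_range_succ, Finset.sum_range_zero]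
    ring
  rcases hlat with ⟨hew, c1, c2, c3, h12, hx, ha, hg⟩ | ⟨c1, c2, c3, hc1, hx, ha, hg⟩
  · -- q-quadratic case
    obtain ⟨p, hp⟩ : ∃ p, p = Complex.exp ((ν : ℂ) / 2 * w) := ⟨_, rfl⟩
    obtain ⟨p2, hp2⟩ : ∃ p2, p2 = Complex.exp (-((ν : ℂ) / 2 * w)) := ⟨_, rfl⟩
    obtain ⟨r, hr⟩ : ∃ r, r = Complex.exp ((1 : ℂ) / 2 * w) := ⟨_, rfl⟩
    obtain ⟨r2, hr2⟩ : ∃ r2, r2 = Complex.exp (-((1 : ℂ) / 2 * w)) := ⟨_, rfl⟩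
    have hp1 : p * p2 = 1 := by
      rw [hp, hp2, ← Complex.exp_add, show (ν : ℂ) / 2 * w + -((ν : ℂ) / 2 * w) = 0 by ring,
        Complex.exp_zero]
    have hr1 : r * r2 = 1 := by
      rw [hr, hr2, ← Complex.exp_add, show (1 : ℂ) / 2 * w + -((1 : ℂ) / 2 * w) = 0 by ring,
        Complex.exp_zero]
    have hrw : r * r = Complex.exp w := by
      rw [hr, ← Complex.exp_add, show (1 : ℂ) / 2 * w + (1 : ℂ) / 2 * w = w by ring]
    have hrr2 : r - r2 ≠ 0 := by
      intro h
      apply hew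
      have h2 : r = r2 := sub_eq_zero.mp h
      rw [← hrw]
      calc r * r = r * r2 := by rw [← h2]
        _ = 1 := hr1
    obtain ⟨E, hE⟩ : ∃ E, E = (r - r2)⁻¹ := ⟨_, rfl⟩
    have hE1 : (r - r2) * E = 1 := by rw [hE]; exact mul_inv_cancel₀ hrr2
    have haν : a ν = (p + p2) / 2 := by rw [ha ν, ← hp, ← hp2]
    have ha2ν : a (2 * ν) = (p * p + p2 * p2) / 2 := by
      rw [ha (2 * ν),
        show ((2 * ν : ℝ) : ℂ) / 2 * w = (ν : ℂ) / 2 * w + (ν : ℂ) / 2 * w by push_cast; ring,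
        show -((ν : ℂ) / 2 * w + (ν : ℂ) / 2 * w) = -((ν : ℂ) / 2 * w) + -((ν : ℂ) / 2 * w) by
          ring,
        Complex.exp_add, Complex.exp_add, ← hp, ← hp2]
    have hgν : g ν = (p - p2) * E := by
      rw [hg ν, ← hp, ← hp2, ← hr, ← hr2, div_eq_mul_inv, ← hE]
    have hg2ν : g (2 * ν) = (p * p - p2 * p2) * E := by
      rw [hg (2 * ν),
        show ((2 * ν : ℝ) : ℂ) / 2 * w = (ν : ℂ) / 2 * w + (ν : ℂ) / 2 * w by push_cast; ring,
        show -((ν : ℂ) / 2 * w + (ν : ℂ) / 2 * w) = -((ν : ℂ) / 2 * w) + -((ν : ℂ) / 2 * w) by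
          ring,
        Complex.exp_add, Complex.exp_add, ← hp, ← hp2, ← hr, ← hr2, div_eq_mul_inv, ← hE]
    have hkap : kap a g st tt (2 * ν + 1) =
        ((p * p + p2 * p2) / 2) * tt.coeff 1 +
          1 / 2 * ((p * p - p2 * p2) * E) * (2 * st.coeff 2) := by
      unfold kap
      rw [show (2 * ν + 1 - 1 : ℝ) = 2 * ν by ring, ha2ν, hg2ν]
    refine ⟨(tt.coeff 0 + c3 * tt.coeff 1) * a ν - c3 * tt.coeff 1 * a (2 * ν) +
      (st.coeff 1 + 2 * c3 * st.coeff 2) * g ν - c3 * st.coeff 2 * g (2 * ν), ?_⟩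
    intro z hz
    apply mul_right_cancel₀ hz
    rw [hT ν z, hkap, haν, ha2ν, hgν, hg2ν]
    obtain ⟨u, hu⟩ : ∃ u, u = Complex.exp (z * w) := ⟨_, rfl⟩
    obtain ⟨u2, hu2⟩ : ∃ u2, u2 = Complex.exp (-(z * w)) := ⟨_, rfl⟩
    have hu1 : u * u2 = 1 := by
      rw [hu, hu2, ← Complex.exp_add, show z * w + -(z * w) = 0 by ring, Complex.exp_zero]
    simp only [sig, xl, hstev, httev, hx]
    rw [show (z + ((ν + 1 : ℝ) : ℂ) / 2) * w = z * w + ((ν : ℂ) / 2 * w + (1 : ℂ) / 2 * w) by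
          push_cast; ring,
        show -(z * w + ((ν : ℂ) / 2 * w + (1 : ℂ) / 2 * w)) = -(z * w) + (-((ν : ℂ) / 2 * w) + -((1 : ℂ) / 2 * w)) by ring,
        show (z - 1 + ((ν + 1 : ℝ) : ℂ) / 2) * w
            = z * w + ((ν : ℂ) / 2 * w + -((1 : ℂ) / 2 * w)) by push_cast; ring,
        show -(z * w + ((ν : ℂ) / 2 * w + -((1 : ℂ) / 2 * w))) = -(z * w) + (-((ν : ℂ) / 2 * w) + (1 : ℂ) / 2 * w) by ring,
        show (z + (ν : ℂ) / 2) * w = z * w + (ν : ℂ) / 2 * w by ring,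
        show -(z * w + (ν : ℂ) / 2 * w) = -(z * w) + -((ν : ℂ) / 2 * w) by ring,
        show (z + (ν : ℂ) + ((1 : ℝ) : ℂ) / 2) * w
            = z * w + ((ν : ℂ) / 2 * w + ((ν : ℂ) / 2 * w + (1 : ℂ) / 2 * w)) by push_cast; ring,
        show -(z * w + ((ν : ℂ) / 2 * w + ((ν : ℂ) / 2 * w + (1 : ℂ) / 2 * w))) = -(z * w) + (-((ν : ℂ) / 2 * w) + (-((ν : ℂ) / 2 * w) + -((1 : ℂ) / 2 * w))) by ring,
        show (z + (ν : ℂ) - 1 + ((1 : ℝ) : ℂ) / 2) * w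
            = z * w + ((ν : ℂ) / 2 * w + ((ν : ℂ) / 2 * w + -((1 : ℂ) / 2 * w))) by
          push_cast; ring,
        show -(z * w + ((ν : ℂ) / 2 * w + ((ν : ℂ) / 2 * w + -((1 : ℂ) / 2 * w)))) = -(z * w) + (-((ν : ℂ) / 2 * w) + (-((ν : ℂ) / 2 * w) + (1 : ℂ) / 2 * w)) by ring,
        show (z + (ν : ℂ)) * w = z * w + ((ν : ℂ) / 2 * w + (ν : ℂ) / 2 * w) by ring,
        show -(z * w + ((ν : ℂ) / 2 * w + (ν : ℂ) / 2 * w)) = -(z * w) + (-((ν : ℂ) / 2 * w) + -((ν : ℂ) / 2 * w)) by ring,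
        show (z + ((1 : ℝ) : ℂ) / 2) * w = z * w + (1 : ℂ) / 2 * w by push_cast; ring,
        show -(z * w + (1 : ℂ) / 2 * w) = -(z * w) + -((1 : ℂ) / 2 * w) by ring,
        show (z - 1 + ((1 : ℝ) : ℂ) / 2) * w = z * w + -((1 : ℂ) / 2 * w) by push_cast; ring,
        show -(z * w + -((1 : ℂ) / 2 * w)) = -(z * w) + (1 : ℂ) / 2 * w by ring]
    simp only [Complex.exp_add]
    rw [← hu, ← hu2, ← hp, ← hp2, ← hr, ← hr2]
    apply mul_right_cancel₀ hrr2
    linear_combination (norm := ring1) (u2*p2^2*r2*c2*(st.coeff 1) + (2 : ℂ)*u2*p2^2*r2*c2*c3*(st.coeff 2) + (-1 : ℂ)*u2*p2^2*r*c2*(st.coeff 1) + (-2 : ℂ)*u2*p2^2*r*c2*c3*(st.coeff 2) + (-1 : ℂ)*u2*p*p2*r2*c2*(st.coeff 1) + (-2 : ℂ)*u2*p*p2*r2*c2*c3*(st.coeff 2) + u2*p*p2*r*c2*(st.coeff 1) + (2 : ℂ)*u2*p*p2*r*c2*c3*(st.coeff 2) + u2^2*p2^4*r2*c2^2*(st.coeff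 2) + (-1 : ℂ)*u2^2*p2^4*r*c2^2*(st.coeff 2) + (-1 : ℂ)*u2^2*p^2*p2^2*r2*c2^2*(st.coeff 2) + u2^2*p^2*p2^2*r*c2^2*(st.coeff 2) + (-1 : ℂ)*u*p*p2*r2*c1*(st.coeff 1) + (-2 : ℂ)*u*p*p2*r2*c1*c3*(st.coeff 2) + u*p*p2*r*c1*(st.coeff 1) + (2 : ℂ)*u*p*p2*r*c1*c3*(st.coeff 2) + u*p^2*r2*c1*(st.coeff 1) + (2 : ℂ)*u*p^2*r2*c1*c3*(st.coeff 2) + (-1 : ℂ)*u*p^2*r*c1*(st.coeff 1) + (-2 : ℂ)*u*p^2*r*c1*c3*(st.coeff 2) + (-1 : ℂ)*u^2*p^2*p2^2*r2*c1^2*(st.coeff 2) + u^2*p^2*p2^2*r*c1^2*(st.coeff 2) + u^2*p^4*r2*c1^2*(st.coeff 2) + (-1 : ℂ)*u^2*p^4*r*c1^2*(st.coeff 2)) * hE1 + ((2 : ℂ)*r2*c1*c2*(st.coeff 2) + (-2 : ℂ)*r*c1*c2*(st.coeff 2) + (-2 : ℂ)*p^2*p2^2*r2*c1*c2*(st.coeff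 2) + (2 : ℂ)*p^2*p2^2*r*c1*c2*(st.coeff 2)) * hu1 + ((-2 : ℂ)*r2*c1*c2*(st.coeff 2) + (2 : ℂ)*r*c1*c2*(st.coeff 2) + (-2 : ℂ)*p*p2*r2*c1*c2*(st.coeff 2) + (2 : ℂ)*p*p2*r*c1*c2*(st.coeff 2) + (-1 : ℂ)*u2*r2*c2*(st.coeff 1) + (-2 : ℂ)*u2*r2*c2*c3*(st.coeff 2) + (1/2 : ℂ)*u2*r2^2*c2*(tt.coeff 0) + (1/2 : ℂ)*u2*r2^2*c2*c3*(tt.coeff 1) + u2*r*c2*(st.coeff 1) + (2 : ℂ)*u2*r*c2*c3*(st.coeff 2) + (-1 : ℂ)*u2*r*r2*c2*(tt.coeff 0) + (-1 : ℂ)*u2*r*r2*c2*c3*(tt.coeff 1) + (1/2 : ℂ)*u2*r^2*c2*(tt.coeff 0) + (1/2 : ℂ)*u2*r^2*c2*c3*(tt.coeff 1) + (-1 : ℂ)*u2^2*r2*c2^2*(st.coeff 2) + (1/2 : ℂ)*u2^2*r2^2*c2^2*(tt.coeff 1) + u2^2*r*c2^2*(st.coeff 2) + (-1 : ℂ)*u2^2*r*r2*c2^2*(tt.coeff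 1) + (1/2 : ℂ)*u2^2*r^2*c2^2*(tt.coeff 1) + (-1 : ℂ)*u2^2*p*p2*r2*c2^2*(st.coeff 2) + (1/2 : ℂ)*u2^2*p*p2*r2^2*c2^2*(tt.coeff 1) + u2^2*p*p2*r*c2^2*(st.coeff 2) + (-1 : ℂ)*u2^2*p*p2*r*r2*c2^2*(tt.coeff 1) + (1/2 : ℂ)*u2^2*p*p2*r^2*c2^2*(tt.coeff 1) + (-1 : ℂ)*u*r2*c1*(st.coeff 1) + (-2 : ℂ)*u*r2*c1*c3*(st.coeff 2) + (-1/2 : ℂ)*u*r2^2*c1*(tt.coeff 0) + (-1/2 : ℂ)*u*r2^2*c1*c3*(tt.coeff 1) + u*r*c1*(st.coeff 1) + (2 : ℂ)*u*r*c1*c3*(st.coeff 2) + u*r*r2*c1*(tt.coeff 0) + u*r*r2*c1*c3*(tt.coeff 1) + (-1/2 : ℂ)*u*r^2*c1*(tt.coeff 0) + (-1/2 : ℂ)*u*r^2*c1*c3*(tt.coeff 1) + (-1 : ℂ)*u^2*r2*c1^2*(st.coeff 2) + (-1/2 : ℂ)*u^2*r2^2*c1^2*(tt.coeff 1) + u^2*r*c1^2*(st.coeff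 2) + u^2*r*r2*c1^2*(tt.coeff 1) + (-1/2 : ℂ)*u^2*r^2*c1^2*(tt.coeff 1) + (-1 : ℂ)*u^2*p*p2*r2*c1^2*(st.coeff 2) + (-1/2 : ℂ)*u^2*p*p2*r2^2*c1^2*(tt.coeff 1) + u^2*p*p2*r*c1^2*(st.coeff 2) + u^2*p*p2*r*r2*c1^2*(tt.coeff 1) + (-1/2 : ℂ)*u^2*p*p2*r^2*c1^2*(tt.coeff 1)) * hp1 + ((0 : ℂ)) * hr1
  · -- quadratic case
    refine ⟨tt.coeff 0 + (ν : ℂ) * st.coeff 1 + 3 / 4 * (ν : ℂ) ^ 2 * c1 * tt.coeff 1 +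
      1 / 2 * (ν : ℂ) ^ 3 * c1 * st.coeff 2, ?_⟩
    intro z hz
    have hkap : kap a g st tt (2 * ν + 1) = tt.coeff 1 + 2 * (ν : ℂ) * st.coeff 2 := by
      unfold kap
      rw [show (2 * ν + 1 - 1 : ℝ) = 2 * ν by ring, ha, hg]
      push_cast; ring
    apply mul_right_cancel₀ hz
    rw [hT ν z, hkap]
    simp only [sig, xl, hstev, httev, hx]
    push_cast
    ring
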